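/- Suppose (s̃,ã) has support disjoint from (s_t,a_t). If P(s̃'|s̃,ã) ≥ P(s_{t+1}|s_t,a_t), then there exists a probability vector θ consistent with P (over an appropriate canonical SCM) such that the counterfactual probability P̃(s̃'|s̃,ã) equals 1. -/
import Mathlib

lemma pi_sum_prod {ι σ : Type*} [Fintype ι] [DecidableEq ι] [Fintype σ] (g : ι → σ → ℝ) :
    ∑ w : ι → σ, ∏ i, g i (w i) = ∏ i, ∑ s, g i s :=
  (Fintype.prod_sum fun i s => g i s).symm

lemma pi_sum_prod_one {ι σ : Type*} [Fintype ι] [DecidableEq ι] [Fintype σ] (g : ι → σ → ℝ)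
    (h1 : ∀ i, ∑ s, g i s = 1) :
    ∑ w : ι → σ, ∏ i, g i (w i) = 1 := by
  rw [pi_sum_prod]
  exact Finset.prod_eq_one fun i _ => h1 i

lemma pi_sum_prod_fiber {ι σ : Type*} [Fintype ι] [DecidableEq ι] [Fintype σ] [DecidableEq σ]
    (g : ι → σ → ℝ) (h1 : ∀ i, ∑ s, g i s = 1) (i0 : ι) (s0 : σ) :
    ∑ w ∈ Finset.univ.filter (fun w : ι → σ => w i0 = s0), ∏ i, g i (w i) = g i0 s0 := by
  classical
  have hsplit : ∀ w : ι → σ,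
      ∏ i, g i (w i) = g i0 (w i0) * ∏ j : {j // j ≠ i0}, g (j : ι) (w j) := by
    intro w
    rw [Fintype.prod_eq_mul_prod_compl i0]
    congr 1
    exact Finset.prod_subtype _ (fun x => by simp) _
  rw [Finset.sum_filter,
    ← Equiv.sum_comp (Equiv.funSplitAt i0 σ).symm
      (fun w => if w i0 = s0 then ∏ i, g i (w i) else 0),
    Fintype.sum_prod_type]
  have hterm : ∀ (x : σ) (h : {j // j ≠ i0} → σ),
      (if ((Equiv.funSplitAt i0 σ).symm (x, h)) i0 = s0 then
        ∏ i, g i (((Equiv.funSplitAt i0 σ).symm (x, h)) i) else 0)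
      = (if x = s0 then g i0 x * ∏ j : {j // j ≠ i0}, g (j : ι) (h j) else 0) := by
    intro x h
    have e1 : ((Equiv.funSplitAt i0 σ).symm (x, h)) i0 = x := by simp
    have e2 : ∀ j : {j // j ≠ i0}, ((Equiv.funSplitAt i0 σ).symm (x, h)) (j : ι) = h j := by
      intro j; simp [j.2]
    rw [hsplit, e1]
    by_cases hx : x = s0
    · rw [if_pos hx, if_pos hx]
      congr 1
      exact Finset.prod_congr rfl fun j _ => by rw [e2]
    · rw [if_neg hx, if_neg hx]
  simp only [hterm]
  have hinner : ∀ x : σ,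
      (∑ h : {j // j ≠ i0} → σ, if x = s0 then g i0 x * ∏ j : {j // j ≠ i0}, g (j : ι) (h j) else 0)
      = if x = s0 then g i0 s0 else 0 := by
    intro x
    by_cases hx : x = s0
    · subst hx
      simp only [eq_self_iff_true, if_true]
      rw [← Finset.mul_sum,
        pi_sum_prod_one (fun j : {j // j ≠ i0} => g (j : ι)) (fun j => h1 j), mul_one]
    · simp [hx]
  simp only [hinner]
  simp

lemma sum_filter_fst {β γ : Type*} [Fintype β] [Fintype γ] (μ : β → ℝ) (ρ : γ → ℝ)
    (ψ : β → Prop) [DecidablePred ψ] :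
    ∑ u ∈ Finset.univ.filter (fun u : β × γ => ψ u.1), μ u.1 * ρ u.2
      = (∑ v ∈ Finset.univ.filter ψ, μ v) * ∑ w, ρ w := by
  rw [Finset.sum_filter, Finset.sum_filter, Fintype.sum_prod_type, Finset.sum_mul]
  refine Finset.sum_congr rfl fun v _ => ?_
  by_cases h : ψ v
  · simp [h, Finset.mul_sum]
  · simp [h]

lemma sum_filter_snd {β γ : Type*} [Fintype β] [Fintype γ] (μ : β → ℝ) (ρ : γ → ℝ)
    (ψ : γ → Prop) [DecidablePred ψ] :
    ∑ u ∈ Finset.univ.filter (fun u : β × γ => ψ u.2), μ u.1 * ρ u.2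
      = (∑ v, μ v) * ∑ w ∈ Finset.univ.filter ψ, ρ w := by
  rw [Finset.sum_filter, Finset.sum_filter, Fintype.sum_prod_type, Finset.sum_mul]
  refine Finset.sum_congr rfl fun v _ => ?_
  rw [Finset.mul_sum]
  refine Finset.sum_congr rfl fun w _ => ?_
  by_cases h : ψ w <;> simp [h]

lemma coupling_exists {S : Type*} [Fintype S] [DecidableEq S] (p q : S → ℝ) (s0 t0 : S)
    (hp0 : ∀ s, 0 ≤ p s) (hq0 : ∀ s, 0 ≤ q s)
    (hps : ∑ s, p s = 1) (hqs : ∑ s, q s = 1)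
    (hge : q t0 ≤ p s0) :
    ∃ μ : S × S → ℝ, (∀ v, 0 ≤ μ v) ∧ (∀ x, ∑ y, μ (x, y) = p x) ∧
      (∀ y, ∑ x, μ (x, y) = q y) ∧ μ (s0, t0) = q t0 := by
  classical
  have hq1 : q t0 ≤ 1 := by
    have := Finset.single_le_sum (f := q) (fun i _ => hq0 i) (Finset.mem_univ t0)
    rwa [hqs] at this
  have hp1 : p s0 ≤ 1 := by
    have := Finset.single_le_sum (f := p) (fun i _ => hp0 i) (Finset.mem_univ s0)
    rwa [hps] at this
  have hqrest : ∑ y ∈ Finset.univ.erase t0, q y = 1 - q t0 := by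
    have h := Finset.add_sum_erase Finset.univ q (Finset.mem_univ t0)
    rw [hqs] at h; linarith
  have hprest : ∑ x ∈ Finset.univ.erase s0, p x = 1 - p s0 := by
    have h := Finset.add_sum_erase Finset.univ p (Finset.mem_univ s0)
    rw [hps] at h; linarith
  set ν : S → ℝ := fun x => (p x - (if x = s0 then q t0 else 0)) / (1 - q t0) with hν
  have hν0 : ∀ x, 0 ≤ ν x := by
    intro x
    apply div_nonneg _ (by linarith)
    by_cases hx : x = s0
    · subst hx; rw [if_pos rfl]; linarith
    · rw [if_neg hx]; simpa using hp0 x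
  refine ⟨fun v => if v.2 = t0 then (if v.1 = s0 then q t0 else 0) else q v.2 * ν v.1,
    ?_, ?_, ?_, by simp⟩
  · rintro ⟨x, y⟩
    dsimp only
    split_ifs
    · exact hq0 t0
    · exact le_refl 0
    · exact mul_nonneg (hq0 y) (hν0 x)
  · intro x
    have hsum : ∑ y, (if y = t0 then (if x = s0 then q t0 else 0) else q y * ν x)
        = (if x = s0 then q t0 else 0) + (1 - q t0) * ν x := by
      rw [← Finset.add_sum_erase Finset.univ _ (Finset.mem_univ t0), if_pos rfl]
      congr 1
      rw [← hqrest, Finset.sum_mul]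
      refine Finset.sum_congr rfl fun y hy => ?_
      rw [if_neg (Finset.mem_erase.mp hy).1]
    rw [hsum]
    by_cases hq : q t0 = 1
    · have hps0 : p s0 = 1 := le_antisymm hp1 (hq ▸ hge)
      rw [hq, sub_self, zero_mul, add_zero]
      by_cases hx : x = s0
      · subst hx; rw [if_pos rfl, hps0]
      · rw [if_neg hx]
        have hz : ∑ x' ∈ Finset.univ.erase s0, p x' = 0 := by rw [hprest, hps0]; ring
        have := (Finset.sum_eq_zero_iff_of_nonneg (fun i _ => hp0 i)).mp hz x
          (Finset.mem_erase.mpr ⟨hx, Finset.mem_univ x⟩)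
        rw [this]
    · have hne : (1 : ℝ) - q t0 ≠ 0 := sub_ne_zero.mpr fun h => hq h.symm
      rw [hν, mul_comm, div_mul_cancel₀ _ hne]
      ring
  · intro y
    by_cases hy : y = t0
    · subst hy
      simp only [if_pos rfl]
      simp [Finset.sum_ite_eq']
    · simp only [if_neg hy]
      rw [← Finset.mul_sum]
      by_cases hq : q t0 = 1
      · have hz : ∑ y' ∈ Finset.univ.erase t0, q y' = 0 := by rw [hqrest, hq]; ring
        have hqy : q y = 0 := (Finset.sum_eq_zero_iff_of_nonneg (fun i _ => hq0 i)).mp hz y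
          (Finset.mem_erase.mpr ⟨hy, Finset.mem_univ y⟩)
        rw [hqy, zero_mul]
      · have hne : (1 : ℝ) - q t0 ≠ 0 := sub_ne_zero.mpr fun h => hq h.symm
        have hνsum : ∑ x, ν x = 1 := by
          rw [hν]
          simp only
          rw [← Finset.sum_div, Finset.sum_sub_distrib, hps,
            Finset.sum_ite_eq' Finset.univ s0 (fun _ => q t0)]
          simp [div_self hne]
        rw [hνsum, mul_one]

theorem cf_prob_disjoint_ub_one_attained {S A : Type*} [Fintype S] [Fintype A] [DecidableEq S]
    (P : S → S → A → ℝ)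
    (hP0 : ∀ s' s a, 0 ≤ P s' s a)
    (hPsum : ∀ s a, ∑ s', P s' s a = 1)
    (st st1 sc sc' : S) (a_t ac : A)
    (hpos : 0 < P st1 st a_t)
    (hdisj : ∀ s' : S, ¬(0 < P s' sc ac ∧ 0 < P s' st a_t))
    (hge : P st1 st a_t ≤ P sc' sc ac) :
    ∃ (U : Type) (_ : Fintype U) (f : S → A → U → S) (θ : U → ℝ),
      (∀ u, 0 ≤ θ u) ∧ (∑ u, θ u = 1) ∧
      (∀ s a s', ∑ u ∈ Finset.univ.filter (fun u => f s a u = s'), θ u = P s' s a) ∧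
      (∑ u ∈ Finset.univ.filter (fun u => f sc ac u = sc' ∧ f st a_t u = st1), θ u)
          / P st1 st a_t = 1 := by
  classical
  obtain ⟨μ, hμ0, hX, hY, hpt⟩ := coupling_exists (fun x => P x sc ac) (fun y => P y st a_t)
    sc' st1 (fun s => hP0 s sc ac) (fun s => hP0 s st a_t) (hPsum sc ac) (hPsum st a_t) hge
  have hne : ¬(sc = st ∧ ac = a_t) := by
    rintro ⟨rfl, rfl⟩
    exact hdisj st1 ⟨hpos, hpos⟩
  set g : S × A → S → ℝ := fun p s'' => P s'' p.1 p.2 with hg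
  have hg1 : ∀ p : S × A, ∑ s'', g p s'' = 1 := fun p => hPsum p.1 p.2
  have hρ1 : ∑ w : (S × A) → S, ∏ p : S × A, g p (w p) = 1 := pi_sum_prod_one g hg1
  have hμsum : ∑ v : S × S, μ v = 1 := by
    rw [Fintype.sum_prod_type]
    simp only [hX]
    exact hPsum sc ac
  -- the SCM over the auxiliary carrier
  set U₀ := (S × S) × ((S × A) → S) with hU₀
  set f₀ : S → A → U₀ → S := fun s a u =>
    if s = sc ∧ a = ac then u.1.1 else if s = st ∧ a = a_t then u.1.2 else u.2 (s, a) with hf₀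
  set θ₀ : U₀ → ℝ := fun u => μ u.1 * ∏ p : S × A, g p (u.2 p) with hθ₀
  have key1 : ∀ u, 0 ≤ θ₀ u := fun u =>
    mul_nonneg (hμ0 u.1) (Finset.prod_nonneg fun p _ => hP0 _ _ _)
  have key2 : ∑ u, θ₀ u = 1 := by
    rw [hθ₀, Fintype.sum_prod_type]
    simp only [← Finset.mul_sum]
    rw [← Finset.sum_mul, hμsum, hρ1, one_mul]
  have key3 : ∀ s a s', ∑ u ∈ Finset.univ.filter (fun u => f₀ s a u = s'), θ₀ u = P s' s a := by
    intro s a s'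
    by_cases h1 : s = sc ∧ a = ac
    · obtain ⟨rfl, rfl⟩ := h1
      rw [Finset.filter_congr (fun u _ => by simp [hf₀] :
        ∀ u ∈ Finset.univ, f₀ s a u = s' ↔ u.1.1 = s')]
      simp only [hθ₀]
      rw [sum_filter_fst μ (fun w : (S × A) → S => ∏ p : S × A, g p (w p)) (fun v : S × S => v.1 = s')]
      rw [hρ1, mul_one, Finset.sum_filter, Fintype.sum_prod_type]
      have hx : ∀ x : S, (∑ y : S, if (x, y).1 = s' then μ (x, y) else 0)
          = if x = s' then P x s a else 0 := by
        intro x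
        by_cases h : x = s'
        · subst h; simp [hX]
        · simp [h]
      simp only [hx]
      rw [Finset.sum_ite_eq' Finset.univ s' (fun x => P x s a)]
      simp
    · by_cases h2 : s = st ∧ a = a_t
      · obtain ⟨rfl, rfl⟩ := h2
        rw [Finset.filter_congr (fun u _ => by simp [hf₀, h1] :
          ∀ u ∈ Finset.univ, f₀ s a u = s' ↔ u.1.2 = s')]
        simp only [hθ₀]
        rw [sum_filter_fst μ (fun w : (S × A) → S => ∏ p : S × A, g p (w p)) (fun v : S × S => v.2 = s')]
        rw [hρ1, mul_one, Finset.sum_filter, Fintype.sum_prod_type]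
        have hx : ∀ x : S, (∑ y : S, if (x, y).2 = s' then μ (x, y) else 0) = μ (x, s') := by
          intro x
          simp [Finset.sum_ite_eq']
        simp only [hx]
        exact hY s'
      · rw [Finset.filter_congr (fun u _ => by simp [hf₀, h1, h2] :
          ∀ u ∈ Finset.univ, f₀ s a u = s' ↔ u.2 (s, a) = s')]
        simp only [hθ₀]
        rw [sum_filter_snd μ (fun w : (S × A) → S => ∏ p : S × A, g p (w p)) (fun w : (S × A) → S => w (s, a) = s')]
        rw [hμsum, one_mul, pi_sum_prod_fiber g hg1 (s, a) s']
  have key4 : ∑ u ∈ Finset.univ.filter (fun u => f₀ sc ac u = sc' ∧ f₀ st a_t u = st1), θ₀ u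
      = P st1 st a_t := by
    have hc2 : ¬(st = sc ∧ a_t = ac) := fun h => hne ⟨h.1.symm, h.2.symm⟩
    rw [Finset.filter_congr (fun u _ => by simp [hf₀, hc2] :
      ∀ u ∈ Finset.univ, (f₀ sc ac u = sc' ∧ f₀ st a_t u = st1) ↔ (u.1.1 = sc' ∧ u.1.2 = st1))]
    simp only [hθ₀]
    rw [sum_filter_fst μ (fun w : (S × A) → S => ∏ p : S × A, g p (w p))
      (fun v : S × S => v.1 = sc' ∧ v.2 = st1)]
    rw [hρ1, mul_one]
    have hfil : Finset.univ.filter (fun v : S × S => v.1 = sc' ∧ v.2 = st1) = {(sc', st1)} := by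
      ext v
      simp [Prod.ext_iff]
    rw [hfil, Finset.sum_singleton, hpt]
  -- transport to a `Type 0` carrier
  obtain ⟨n, ⟨e⟩⟩ : ∃ n : ℕ, Nonempty (U₀ ≃ Fin n) := ⟨Fintype.card U₀, ⟨Fintype.equivFin U₀⟩⟩
  refine ⟨Fin n, inferInstance, fun s a u => f₀ s a (e.symm u), fun u => θ₀ (e.symm u),
    fun u => key1 _, ?_, ?_, ?_⟩
  · rw [Equiv.sum_comp e.symm θ₀]
    exact key2
  · intro s a s'
    rw [Finset.sum_filter,
      Equiv.sum_comp e.symm (fun v => if f₀ s a v = s' then θ₀ v else 0),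
      ← Finset.sum_filter]
    exact key3 s a s'
  · rw [Finset.sum_filter,
      Equiv.sum_comp e.symm (fun v => if f₀ sc ac v = sc' ∧ f₀ st a_t v = st1 then θ₀ v else 0),
      ← Finset.sum_filter, key4]
    exact div_self (ne_of_gt hpos)
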